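/- arXiv:1706.02211 — 2 statements merged into one kernel-verified Lean document; each statement's English description precedes it below -/
import Mathlib

section
/- Let X* be an optimal solution of the multicommodity problem (Q) (minimizing F over nonnegative flows satisfying flow conservation), and define P*_{ij} = (2^{Σ_m x*_{ij}(m)} − 1)/f_{ij}. If additionally Σ_{j:(i,j)∈E} P*_{ij} ≤ P_max for all i, then (X*, P*) is an optimal solution of problem (P). -/
open Finset

/-- Feasibility for problem (Q): nonnegative flows satisfying flow conservation. -/
def FeasQ {V E M : Type*} [Fintype E] [DecidableEq V]
    (src tgt : E → V) (s : V → M → ℝ) (x : E → M → ℝ) : Prop :=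
  (∀ e m, 0 ≤ x e m) ∧
  (∀ i m, (∑ e ∈ univ.filter (fun e => tgt e = i), x e m)
        - (∑ e ∈ univ.filter (fun e => src e = i), x e m) + s i m = 0)

/-- Objective of problem (Q) with weights `w_{ij} = f_{i,C}/f_{ij}`. -/
noncomputable def objQ {V E M : Type*} [Fintype E] [Fintype M]
    (src : E → V) (f : E → ℝ) (fC : V → ℝ) (x : E → M → ℝ) : ℝ :=
  ∑ e, (fC (src e) / f e) * (2 : ℝ) ^ (∑ m, x e m)

/-- Feasibility for problem (P). -/
def FeasP {V E M : Type*} [Fintype E] [Fintype M] [DecidableEq V]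
    (src tgt : E → V) (f : E → ℝ) (s : V → M → ℝ) (Pmax : ℝ)
    (x : E → M → ℝ) (P : E → ℝ) : Prop :=
  (∀ e m, 0 ≤ x e m) ∧ (∀ e, 0 ≤ P e) ∧
  (∀ e, ∑ m, x e m ≤ Real.logb 2 (1 + f e * P e)) ∧
  (∀ i m, (∑ e ∈ univ.filter (fun e => tgt e = i), x e m)
        - (∑ e ∈ univ.filter (fun e => src e = i), x e m) + s i m = 0) ∧
  (∀ i, ∑ e ∈ univ.filter (fun e => src e = i), P e ≤ Pmax)

/-- Objective of problem (P). -/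
def objP {V E M : Type*} [Fintype E] (src : E → V) (fC : V → ℝ) (_x : E → M → ℝ)
    (P : E → ℝ) : ℝ :=
  ∑ e, P e * fC (src e)

/-- If `X*` is optimal for the multicommodity problem (Q) and the recovered powers
`P*_{ij} = (2^{Σ_m x*_{ij}(m)} − 1)/f_{ij}` satisfy the per-node power budgets, then
`(X*, P*)` is an optimal solution of problem (P). -/
theorem Q_solution_solves_P {V E M : Type*}
    [Fintype V] [Fintype E] [Fintype M] [DecidableEq V]
    (src tgt : E → V) (f : E → ℝ) (hf : ∀ e, 0 < f e)
    (fC : V → ℝ) (hfC : ∀ i, 0 < fC i) (s : V → M → ℝ) (Pmax : ℝ)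
    (xs : E → M → ℝ)
    (hQfeas : FeasQ src tgt s xs)
    (hQopt : ∀ y, FeasQ src tgt s y → objQ src f fC xs ≤ objQ src f fC y)
    (Ps : E → ℝ)
    (hPs : ∀ e, Ps e = ((2 : ℝ) ^ (∑ m, xs e m) - 1) / f e)
    (hbudget : ∀ i, ∑ e ∈ univ.filter (fun e => src e = i), Ps e ≤ Pmax) :
    FeasP src tgt f s Pmax xs Ps ∧
    ∀ y Q, FeasP src tgt f s Pmax y Q → objP src fC xs Ps ≤ objP src fC y Q := by
  -- abbreviations
  have hone : ∀ (x : E → M → ℝ), (∀ e m, 0 ≤ x e m) → ∀ e,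
      (1 : ℝ) ≤ (2 : ℝ) ^ (∑ m, x e m) := by
    intro x hx e
    have hS : (0 : ℝ) ≤ ∑ m, x e m := Finset.sum_nonneg fun m _ => hx e m
    calc (1 : ℝ) = (2 : ℝ) ^ (0 : ℝ) := by simp
    _ ≤ (2 : ℝ) ^ (∑ m, x e m) := Real.rpow_le_rpow_of_exponent_le one_le_two hS
  have hPs0 : ∀ e, 0 ≤ Ps e := by
    intro e
    rw [hPs e]
    exact div_nonneg (by linarith [hone xs hQfeas.1 e]) (hf e).le
  have hfeas : FeasP src tgt f s Pmax xs Ps := by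
    refine ⟨hQfeas.1, hPs0, ?_, hQfeas.2, hbudget⟩
    intro e
    have h2 : 1 + f e * Ps e = (2 : ℝ) ^ (∑ m, xs e m) := by
      rw [hPs e, mul_div_cancel₀ _ (hf e).ne']
      ring
    rw [h2, Real.logb_rpow (by norm_num) (by norm_num)]
  refine ⟨hfeas, fun y Q hyQ => ?_⟩
  obtain ⟨hy0, hQ0, hlog, hcons, _⟩ := hyQ
  have hQy : FeasQ src tgt s y := ⟨hy0, hcons⟩
  have hQle : ∀ e, (fC (src e) / f e) * (2 : ℝ) ^ (∑ m, y e m) - fC (src e) / f e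
      ≤ Q e * fC (src e) := by
    intro e
    have hpos : (0 : ℝ) < 1 + f e * Q e := by
      have := mul_nonneg (hf e).le (hQ0 e); linarith
    have h2 : (2 : ℝ) ^ (∑ m, y e m) ≤ 1 + f e * Q e := by
      calc (2 : ℝ) ^ (∑ m, y e m) ≤ (2 : ℝ) ^ (Real.logb 2 (1 + f e * Q e)) :=
            Real.rpow_le_rpow_of_exponent_le one_le_two (hlog e)
        _ = 1 + f e * Q e := Real.rpow_logb (by norm_num) (by norm_num) hpos
    have hfne : f e ≠ 0 := (hf e).ne'
    have : fC (src e) / f e * ((2 : ℝ) ^ (∑ m, y e m) - 1) ≤ fC (src e) / f e * (f e * Q e) := by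
      apply mul_le_mul_of_nonneg_left (by linarith) (div_nonneg (hfC (src e)).le (hf e).le)
    calc (fC (src e) / f e) * (2 : ℝ) ^ (∑ m, y e m) - fC (src e) / f e
        = fC (src e) / f e * ((2 : ℝ) ^ (∑ m, y e m) - 1) := by ring
      _ ≤ fC (src e) / f e * (f e * Q e) := this
      _ = Q e * fC (src e) := by field_simp
  have hPeq : objP src fC xs Ps = objQ src f fC xs - ∑ e, fC (src e) / f e := by
    unfold objP objQ
    rw [← Finset.sum_sub_distrib]
    apply Finset.sum_congr rfl
    intro e _
    rw [hPs e]
    have hfne : f e ≠ 0 := (hf e).ne'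
    field_simp
  calc objP src fC xs Ps = objQ src f fC xs - ∑ e, fC (src e) / f e := hPeq
    _ ≤ objQ src f fC y - ∑ e, fC (src e) / f e := by
        linarith [hQopt y hQy]
    _ = ∑ e, ((fC (src e) / f e) * (2 : ℝ) ^ (∑ m, y e m) - fC (src e) / f e) := by
        rw [Finset.sum_sub_distrib]; rfl
    _ ≤ ∑ e, Q e * fC (src e) := Finset.sum_le_sum fun e _ => hQle e
    _ = objP src fC y Q := rfl
end

section
/- The Hessian Σ_{j∈N_i} w_{ij} 2^{a_jᵀx_i}(ln 2)² a_j a_jᵀ + ρ(I_M ⊗ C_iᵀC_i) of the local augmented Lagrangian has rank exactly M·|N_i|, and its kernel consists of all vectors vanishing on coordinates (j, m) with j ∈ N_i. -/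
set_option maxHeartbeats 1000000


open Matrix Finset

/-- The Hessian `Σ_{j∈N_i} w_{ij} 2^{a_jᵀx} (ln 2)² a_j a_jᵀ + ρ (I_M ⊗ C_iᵀC_i)` of
the local augmented Lagrangian has rank exactly `M·|N_i|`, and its kernel consists of
all vectors vanishing on the coordinates `(m, j)` with `j ∈ N_i`. -/
theorem localAL_hessian_rank_kernel {N M : ℕ} (i : Fin N)
    (Ni : Finset (Fin N)) (hi : i ∉ Ni)
    (C : Matrix (Fin N) (Fin N) ℝ)
    (hC : ∀ l k, C l k =
      if l = i ∧ k ∈ Ni then 1 else if l = k ∧ k ∈ Ni then -1 else 0)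
    (w : Fin N → ℝ) (hw : ∀ j ∈ Ni, 0 < w j) (ρ : ℝ) (hρ : 0 < ρ)
    (x : Fin M × Fin N → ℝ)
    (H : Matrix (Fin M × Fin N) (Fin M × Fin N) ℝ)
    (hH : ∀ p q, H p q =
        (∑ j ∈ Ni, w j * (2 : ℝ) ^ (∑ m, x (m, j)) * (Real.log 2) ^ 2 *
          ((if p.2 = j then (1 : ℝ) else 0) * (if q.2 = j then (1 : ℝ) else 0)))
        + ρ * (if p.1 = q.1 then (Cᵀ * C) p.2 q.2 else 0)) :
    H.rank = M * Ni.card ∧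
    (∀ v : Fin M × Fin N → ℝ,
      H.mulVec v = 0 ↔ ∀ p : Fin M × Fin N, p.2 ∈ Ni → v p = 0) := by
  classical
  set c : Fin N → ℝ := fun j => w j * (2 : ℝ) ^ (∑ m, x (m, j)) * (Real.log 2) ^ 2 with hcdef
  have hcpos : ∀ j ∈ Ni, 0 < c j := by
    intro j hj
    have h1 : (0:ℝ) < (2:ℝ) ^ (∑ m, x (m, j)) := Real.rpow_pos_of_pos (by norm_num) _
    have h2 : (0:ℝ) < Real.log 2 := Real.log_pos (by norm_num)
    have h3 := hw j hj
    positivity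
  -- entries of CᵀC
  have hCC : ∀ j k, (Cᵀ * C) j k =
      if j ∈ Ni ∧ k ∈ Ni then (if j = k then 2 else 1) else 0 := by
    intro j k
    simp only [Matrix.mul_apply, Matrix.transpose_apply]
    by_cases hj : j ∈ Ni
    · by_cases hk : k ∈ Ni
      · have hij : j ≠ i := fun h => hi (h ▸ hj)
        have hik : k ≠ i := fun h => hi (h ▸ hk)
        by_cases hjk : j = k
        · subst hjk
          have he : ∀ l, C l j * C l j =
              (if l = i then (1:ℝ) else 0) + (if l = j then 1 else 0) := by
            intro l
            rw [hC]
            by_cases h1 : l = i <;> by_cases h2 : l = j <;> simp_all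
          rw [Finset.sum_congr rfl (fun l _ => he l), Finset.sum_add_distrib]
          simp [Finset.sum_ite_eq', hj]
          norm_num
        · have he : ∀ l, C l j * C l k = (if l = i then (1:ℝ) else 0) := by
            intro l
            rw [hC, hC]
            by_cases h1 : l = i <;> by_cases h2 : l = j <;> by_cases h3 : l = k <;>
              simp_all
          rw [Finset.sum_congr rfl (fun l _ => he l)]
          simp [hj, hk, hjk]
      · have he : ∀ l, C l j * C l k = 0 := by
          intro l; rw [hC l k]; simp [hk]
        rw [Finset.sum_congr rfl (fun l _ => he l)]
        simp [hk]
    · have he : ∀ l, C l j * C l k = 0 := by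
        intro l; rw [hC l j]; simp [hj]
      rw [Finset.sum_congr rfl (fun l _ => he l)]
      simp [hj]
  -- kernel characterization
  have key : ∀ v : Fin M × Fin N → ℝ,
      H.mulVec v = 0 ↔ ∀ p : Fin M × Fin N, p.2 ∈ Ni → v p = 0 := by
    intro v
    constructor
    · -- forward direction
      intro hv
      set T : Fin N → ℝ := fun j => ∑ m, v (m, j) with hT
      set s : Fin M → ℝ := fun m => ∑ k ∈ Ni, v (m, k) with hs
      -- component formula
      have hcomp : ∀ m : Fin M, ∀ j ∈ Ni,
          c j * T j + ρ * (s m + v (m, j)) = 0 := by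
        intro m j hj
        have h0 : H.mulVec v (m, j) = 0 := congrFun hv (m, j)
        rw [Matrix.mulVec, show (fun q => H (m,j) q) ⬝ᵥ v = ∑ q, H (m,j) q * v q from rfl] at h0
        have hA : ∀ k : Fin N, (∑ j' ∈ Ni, c j' *
            ((if j = j' then (1:ℝ) else 0) * (if k = j' then 1 else 0)))
            = if k = j then c j else 0 := by
          intro k
          rw [Finset.sum_eq_single_of_mem j hj]
          · by_cases h : k = j <;> simp [h]
          · intro b hb hbj
            have hb2 : ¬ (j = b) := fun h => hbj h.symm
            simp [hb2]
        have hB : ∀ k, (Cᵀ * C) j k = if k ∈ Ni then (if j = k then (2:ℝ) else 1) else 0 := by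
          intro k; rw [hCC]; by_cases h : k ∈ Ni <;> simp [h, hj]
        have hpt : ∀ q : Fin M × Fin N, H (m, j) q * v q =
            (if q.2 = j then c j * v q else 0) +
            (if q.1 = m then (if q.2 ∈ Ni then
                ρ * v q + (if j = q.2 then ρ * v q else 0) else 0) else 0) := by
          intro q
          rw [hH]
          show ((∑ j' ∈ Ni, c j' * ((if j = j' then (1:ℝ) else 0) * (if q.2 = j' then 1 else 0)))
              + ρ * (if m = q.1 then (Cᵀ * C) j q.2 else 0)) * v q = _
          rw [hA q.2, hB q.2]
          split_ifs <;>
            first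
            | ring1
            | (exfalso; first
               | exact ‹¬q.1 = m› ‹m = q.1›.symm
               | exact ‹¬m = q.1› ‹q.1 = m›.symm
               | exact ‹¬j = q.2› ‹q.2 = j›.symm
               | exact ‹¬q.2 = j› ‹j = q.2›.symm
               | exact ‹q.2 ∉ Ni› (‹q.2 = j› ▸ hj)
               | simp_all)
        rw [Finset.sum_congr rfl (fun q _ => hpt q), Finset.sum_add_distrib] at h0
        have e1 : (∑ q : Fin M × Fin N, if q.2 = j then c j * v q else 0) = c j * T j := by
          rw [Fintype.sum_prod_type]
          simp only [Finset.sum_ite_eq', Finset.mem_univ, if_true]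
          rw [← Finset.mul_sum]
        have e2 : (∑ q : Fin M × Fin N, if q.1 = m then (if q.2 ∈ Ni then
              ρ * v q + (if j = q.2 then ρ * v q else 0) else 0) else 0)
            = ρ * (s m + v (m, j)) := by
          rw [Fintype.sum_prod_type]
          have e3 : ∀ m' : Fin M, (∑ k : Fin N, if m' = m then (if k ∈ Ni then
              ρ * v (m', k) + (if j = k then ρ * v (m', k) else 0) else 0) else 0)
              = if m' = m then (∑ k : Fin N, (if k ∈ Ni then
              ρ * v (m', k) + (if j = k then ρ * v (m', k) else 0) else 0)) else 0 := by
            intro m'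
            by_cases h : m' = m <;> simp [h]
          rw [Finset.sum_congr rfl (fun m' _ => e3 m'), Finset.sum_ite_eq' univ m]
          simp only [Finset.mem_univ, if_true]
          rw [show (∑ k : Fin N, (if k ∈ Ni then
              ρ * v (m, k) + (if j = k then ρ * v (m, k) else 0) else 0))
              = ∑ k ∈ Ni, (ρ * v (m, k) + (if j = k then ρ * v (m, k) else 0)) by
            rw [Finset.sum_ite_mem, Finset.univ_inter]]
          rw [Finset.sum_add_distrib, ← Finset.mul_sum, Finset.sum_ite_eq Ni j, if_pos hj]
          show ρ * s m + ρ * v (m, j) = _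
          ring
        rw [e1, e2] at h0
        exact h0
      -- sum over m
      have heq1 : ∀ j ∈ Ni, (M * c j + ρ) * T j + ρ * (∑ m, s m) = 0 := by
        intro j hj
        have := Finset.sum_eq_zero (fun m (_ : m ∈ (univ : Finset (Fin M))) => hcomp m j hj)
        rw [Finset.sum_add_distrib, ← Finset.mul_sum, ← Finset.mul_sum,
          Finset.sum_add_distrib, Finset.sum_const, Finset.card_univ,
          Fintype.card_fin] at this
        have hTj : ∑ m : Fin M, v (m, j) = T j := rfl
        rw [hTj, nsmul_eq_mul] at this
        push_cast
        linear_combination this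
      -- σ = ∑ T over Ni
      have hsig : (∑ m, s m) = ∑ j ∈ Ni, T j := by
        rw [hs, hT]
        exact Finset.sum_comm
      -- quadratic trick
      have hquad : (∑ j ∈ Ni, (M * c j + ρ) * T j ^ 2) + ρ * (∑ m, s m) ^ 2 = 0 := by
        have : ∀ j ∈ Ni, (M * c j + ρ) * T j ^ 2 + ρ * (∑ m, s m) * T j = 0 := by
          intro j hj
          have h := heq1 j hj
          linear_combination T j * h
        have hsum := Finset.sum_congr rfl this
        rw [Finset.sum_add_distrib] at hsum
        rw [← Finset.mul_sum, ← hsig] at hsum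
        simp only [Finset.sum_const_zero] at hsum
        linear_combination hsum
      have hTzero : ∀ j ∈ Ni, T j = 0 := by
        have hnn : ∀ j ∈ Ni, 0 ≤ (M * c j + ρ) * T j ^ 2 := by
          intro j hj
          have := hcpos j hj
          positivity
        have h1 : (∑ j ∈ Ni, (M * c j + ρ) * T j ^ 2) = 0 := by
          have h2 : 0 ≤ ∑ j ∈ Ni, (M * c j + ρ) * T j ^ 2 := Finset.sum_nonneg hnn
          nlinarith [sq_nonneg (∑ m, s m), hquad]
        intro j hj
        have := (Finset.sum_eq_zero_iff_of_nonneg hnn).mp h1 j hj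
        have hpos : 0 < M * c j + ρ := by
          have := hcpos j hj
          positivity
        have : T j ^ 2 = 0 := by
          rcases mul_eq_zero.mp this with h | h
          · linarith
          · exact h
        exact pow_eq_zero_iff (by norm_num) |>.mp this
      have hszero : ∀ m, s m = 0 := by
        intro m
        have hvm : ∀ j ∈ Ni, v (m, j) = -s m := by
          intro j hj
          have := hcomp m j hj
          rw [hTzero j hj] at this
          have : s m + v (m, j) = 0 := by
            rcases mul_eq_zero.mp (by linarith : ρ * (s m + v (m,j)) = 0) with h | h
            · linarith
            · exact h
          linarith
        have h0 : s m = ∑ j ∈ Ni, v (m, j) := rfl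
        rw [Finset.sum_congr rfl hvm, Finset.sum_const, nsmul_eq_mul, mul_neg] at h0
        have h3 : (1 + (Ni.card : ℝ)) * s m ^ 2 = 0 := by linear_combination (s m) * h0
        have hn1 : (0:ℝ) < 1 + (Ni.card : ℝ) := by
          have := (Nat.cast_nonneg Ni.card : (0:ℝ) ≤ Ni.card); linarith
        have h4 : s m ^ 2 = 0 := by
          rcases mul_eq_zero.mp h3 with h | h
          · linarith
          · exact h
        exact pow_eq_zero_iff (by norm_num) |>.mp h4
      intro p hp
      have := hcomp p.1 p.2 hp
      rw [hTzero p.2 hp, hszero p.1] at this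
      have h2 : v (p.1, p.2) = v p := by rfl
      nlinarith [this]
    · -- backward direction
      intro hv
      funext p
      show (∑ q, H p q * v q) = 0
      apply Finset.sum_eq_zero
      intro q _
      by_cases hq : q.2 ∈ Ni
      · rw [hv q hq, mul_zero]
      · have : H p q = 0 := by
          rw [hH, hCC]
          rw [Finset.sum_eq_zero]
          · simp [hq]
          · intro j hj
            have : q.2 ≠ j := fun h => hq (h ▸ hj)
            simp [this]
        rw [this, zero_mul]
  refine ⟨?_, key⟩
  -- rank computation
  have hker : LinearMap.ker H.mulVecLin =
      LinearMap.ker (LinearMap.funLeft ℝ ℝ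
        (Subtype.val : {p : Fin M × Fin N // p.2 ∈ Ni} → Fin M × Fin N)) := by
    ext v
    simp only [LinearMap.mem_ker, Matrix.mulVecLin_apply]
    rw [key v]
    constructor
    · intro h
      funext q
      simp only [LinearMap.funLeft_apply, Pi.zero_apply]
      exact h q.1 q.2
    · intro h p hp
      have := congrFun h (⟨p, hp⟩ : {p : Fin M × Fin N // p.2 ∈ Ni})
      simpa using this
  have hcard : Fintype.card {p : Fin M × Fin N // p.2 ∈ Ni} = M * Ni.card := by
    have e : {p : Fin M × Fin N // p.2 ∈ Ni} ≃ Fin M × {j : Fin N // j ∈ Ni} :=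
      ⟨fun p => (p.1.1, ⟨p.1.2, p.2⟩), fun q => ⟨(q.1, q.2.1), q.2.2⟩,
        fun p => rfl, fun q => rfl⟩
    rw [Fintype.card_congr e, Fintype.card_prod, Fintype.card_fin, Fintype.card_coe]
  have hsurj : Function.Surjective
      (LinearMap.funLeft ℝ ℝ
        (Subtype.val : {p : Fin M × Fin N // p.2 ∈ Ni} → Fin M × Fin N)) :=
    LinearMap.funLeft_surjective_of_injective ℝ ℝ _ Subtype.val_injective
  have h1 := LinearMap.finrank_range_add_finrank_ker H.mulVecLin
  have h2 := LinearMap.finrank_range_add_finrank_ker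
      (LinearMap.funLeft ℝ ℝ
        (Subtype.val : {p : Fin M × Fin N // p.2 ∈ Ni} → Fin M × Fin N))
  rw [LinearMap.range_eq_top.mpr hsurj, finrank_top,
    Module.finrank_fintype_fun_eq_card, Module.finrank_fintype_fun_eq_card,
    hcard, Fintype.card_prod, Fintype.card_fin, Fintype.card_fin] at h2
  rw [hker, Module.finrank_fintype_fun_eq_card, Fintype.card_prod,
    Fintype.card_fin, Fintype.card_fin] at h1
  have hNc : Ni.card ≤ N := by
    have := Finset.card_le_univ Ni
    simpa using this
  have hmul : M * Ni.card ≤ M * N := Nat.mul_le_mul_left M hNc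
  have hrk : H.rank = Module.finrank ℝ (LinearMap.range H.mulVecLin) := rfl
  rw [hrk]
  omega
end
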